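/- Constancy of intersection count under a transversal homotopy: Let V ⊂ ℝᴺ be a compact C¹ submanifold of codimension n, and let F_t : B → ℝᴺ, t ∈ [0,1], be a continuous family of C¹ maps from a compact n-dimensional manifold-with-boundary B such that for every t, F_t is transverse to V and F_t(∂B) ∩ V = ∅. Then the cardinality #(F_t^{-1}(V)) is finite and independent of t. -/

import Mathlib

open Set Metric
open Filter
open scoped NNReal Topology

noncomputable section

/-- A C¹-type bound on the derivative gives a linear approximation estimate. -/
lemma aux_approx {E : Type*} [NormedAddCommGroup E] [NormedSpace ℝ E]
    {F' : Type*} [NormedAddCommGroup F'] [NormedSpace ℝ F']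
    {f : E → F'} {f' : E → E →L[ℝ] F'} {s : Set E} (hconv : Convex ℝ s)
    (hder : ∀ x ∈ s, HasFDerivWithinAt f (f' x) s x)
    (A : E →L[ℝ] F') {c : ℝ≥0} (hc : ∀ x ∈ s, ‖f' x - A‖ ≤ c) :
    ApproximatesLinearOn f A s c := by
  intro x hx y hy
  have h := hconv.norm_image_sub_le_of_norm_hasFDerivWithin_le
    (f := fun z => f z - A z) (f' := fun z => f' z - A) (C := c)
    (fun z hz => (hder z hz).sub (A.hasFDerivAt.hasFDerivWithinAt)) hc hy hx
  calc ‖f x - f y - A (x - y)‖ = ‖(f x - A x) - (f y - A y)‖ := by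
        rw [map_sub]; congr 1; abel
    _ ≤ c * ‖x - y‖ := h

/-- A surjective endomorphism of a finite-dimensional space as a continuous linear equiv. -/
lemma aux_equiv {n : ℕ} (A : (Fin n → ℝ) →L[ℝ] (Fin n → ℝ)) (hA : Function.Surjective ⇑A) :
    ∃ E : (Fin n → ℝ) ≃L[ℝ] (Fin n → ℝ), (E : (Fin n → ℝ) →L[ℝ] (Fin n → ℝ)) = A := by
  have hinj : Function.Injective ⇑A :=
    (LinearMap.injective_iff_surjective (f := (A : (Fin n → ℝ) →ₗ[ℝ] (Fin n → ℝ)))).2 hA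
  exact ⟨(LinearEquiv.ofBijective (A : (Fin n → ℝ) →ₗ[ℝ] (Fin n → ℝ))
    ⟨hinj, hA⟩).toContinuousLinearEquiv, by ext x; rfl⟩

lemma aux_symm_pos {n : ℕ} (hn : 0 < n) (E : (Fin n → ℝ) ≃L[ℝ] (Fin n → ℝ)) :
    0 < ‖(E.symm : (Fin n → ℝ) →L[ℝ] (Fin n → ℝ))‖₊ := by
  rw [nnnorm_pos]
  intro h
  have h2 : E.symm (E (fun _ => 1)) = (fun _ => 1 : Fin n → ℝ) := E.symm_apply_apply _
  rw [show E.symm (E (fun _ => 1)) =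
      (E.symm : (Fin n → ℝ) →L[ℝ] (Fin n → ℝ)) (E (fun _ => 1)) from rfl, h] at h2
  have := congrFun h2 ⟨0, hn⟩
  norm_num at this

end

/-- Constancy of the intersection count under a transversal homotopy.  `V` is
the compact codimension-`n` submanifold `G⁻¹(0)` of `ℝᴺ` cut out by a C¹
submersion `G`, `B` is the closed unit ball in `ℝⁿ`, and `F t` is a continuous
family of C¹ maps (with continuously varying differentials), each transverse to
`V` on `B` and missing `V` on the boundary sphere.  Then `#(F t)⁻¹(V) ∩ B` is
finite and independent of `t`. -/
theorem stmt19 (n N : ℕ)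
    (G : (Fin N → ℝ) → (Fin n → ℝ)) (hG : ContDiff ℝ 1 G)
    (V : Set (Fin N → ℝ)) (hV : V = G ⁻¹' {0}) (hVcpt : IsCompact V)
    (hGsub : ∀ p ∈ V, Function.Surjective ⇑(fderiv ℝ G p))
    (F : ℝ → (Fin n → ℝ) → (Fin N → ℝ))
    (hFsm : ∀ t ∈ Icc (0 : ℝ) 1, ContDiff ℝ 1 (F t))
    (hFcont : Continuous fun q : ℝ × (Fin n → ℝ) => F q.1 q.2)
    (hDcont : Continuous fun q : ℝ × (Fin n → ℝ) => fderiv ℝ (F q.1) q.2)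
    (htrans : ∀ t ∈ Icc (0 : ℝ) 1, ∀ x ∈ closedBall (0 : Fin n → ℝ) 1,
      F t x ∈ V → Function.Surjective ⇑((fderiv ℝ G (F t x)).comp (fderiv ℝ (F t) x)))
    (hbd : ∀ t ∈ Icc (0 : ℝ) 1, ∀ x ∈ sphere (0 : Fin n → ℝ) 1, F t x ∉ V) :
    ∀ t ∈ Icc (0 : ℝ) 1,
      {x ∈ closedBall (0 : Fin n → ℝ) 1 | F t x ∈ V}.Finite ∧
      {x ∈ closedBall (0 : Fin n → ℝ) 1 | F t x ∈ V}.ncard =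
        {x ∈ closedBall (0 : Fin n → ℝ) 1 | F 0 x ∈ V}.ncard := by
  have hGF : ∀ t x, F t x ∈ V ↔ G (F t x) = 0 := by
    intro t x; rw [hV]; simp
  rcases Nat.eq_zero_or_pos n with hn | hn
  · -- degenerate case `n = 0`
    subst hn
    haveI : Subsingleton (Fin 0 → ℝ) := ⟨fun a b => funext fun i => i.elim0⟩
    have hall : ∀ t x, F t x ∈ V := fun t x => (hGF t x).2 (Subsingleton.elim _ _)
    intro t ht
    constructor
    · exact Set.toFinite _
    · congr 1
      ext x
      simp [hall]
  -- main case: n ≥ 1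
  haveI : Nontrivial (Fin n → ℝ) := by
    refine ⟨0, (fun _ => 1), fun h => ?_⟩
    have := congrFun h ⟨0, hn⟩
    norm_num at this
  set I : Set ℝ := Icc (0:ℝ) 1 with hI
  set S : ℝ → Set (Fin n → ℝ) := fun t => {x ∈ closedBall (0 : Fin n → ℝ) 1 | F t x ∈ V}
    with hS
  have hder : ∀ t ∈ I, ∀ x, HasFDerivAt (fun y => G (F t y))
      ((fderiv ℝ G (F t x)).comp (fderiv ℝ (F t) x)) x := by
    intro t ht x
    exact ((hG.differentiable one_ne_zero (F t x)).hasFDerivAt).comp x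
      (((hFsm t ht).differentiable one_ne_zero x).hasFDerivAt)
  have hA : Continuous fun q : ℝ × (Fin n → ℝ) =>
      (fderiv ℝ G (F q.1 q.2)).comp (fderiv ℝ (F q.1) q.2) :=
    ((hG.continuous_fderiv one_ne_zero).comp hFcont).clm_comp hDcont
  -- key local existence/uniqueness of zeros near a given zero
  have ball_spec : ∀ t₀ ∈ I, ∀ p ∈ S t₀, ∀ r₀ : ℝ, 0 < r₀ →
      ∃ r : ℝ, 0 < r ∧ r ≤ r₀ ∧ ∀ᶠ t in 𝓝 t₀, t ∈ I →
        ∃ x ∈ closedBall p r, G (F t x) = 0 ∧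
          ∀ y ∈ closedBall p r, G (F t y) = 0 → y = x := by
    intro t₀ ht₀ p hp r₀ hr₀
    obtain ⟨hpB, hpV⟩ := hp
    obtain ⟨E, hE⟩ := aux_equiv _ (htrans t₀ ht₀ p hpB hpV)
    set Np : ℝ≥0 := ‖(E.symm : (Fin n → ℝ) →L[ℝ] (Fin n → ℝ))‖₊ with hNp
    have hNppos : 0 < Np := aux_symm_pos hn E
    set c : ℝ≥0 := Np⁻¹ / 2 with hc
    have hNpinv : 0 < Np⁻¹ := by positivity
    have hcpos : 0 < c := by positivity
    have hclt : c < Np⁻¹ := NNReal.half_lt_self hNpinv.ne'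
    have hAc : ContinuousAt (fun q : ℝ × (Fin n → ℝ) =>
        (fderiv ℝ G (F q.1 q.2)).comp (fderiv ℝ (F q.1) q.2)) (t₀, p) := hA.continuousAt
    rw [Metric.continuousAt_iff] at hAc
    obtain ⟨δ, hδ, hball⟩ := hAc (c : ℝ) (by exact_mod_cast hcpos)
    set r : ℝ := min r₀ (δ/2) with hrdef
    have hrpos : 0 < r := lt_min hr₀ (by linarith)
    refine ⟨r, hrpos, min_le_left _ _, ?_⟩
    set ρ : ℝ := ((Np : ℝ)⁻¹ - (c : ℝ)) * r with hρ
    have hρpos : 0 < ρ := by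
      apply mul_pos _ hrpos
      have : (c : ℝ) < ((Np⁻¹ : ℝ≥0) : ℝ) := by exact_mod_cast hclt
      rw [NNReal.coe_inv] at this
      linarith
    have hGcont : Continuous fun t => G (F t p) :=
      hG.continuous.comp (hFcont.comp (continuous_id.prodMk continuous_const))
    have ev2 : ∀ᶠ t in 𝓝 t₀, ‖G (F t p)‖ < ρ := by
      have h0 : G (F t₀ p) = 0 := (hGF t₀ p).1 hpV
      have := hGcont.continuousAt (x := t₀)
      rw [ContinuousAt, h0] at this
      have hmem : {y : Fin n → ℝ | ‖y‖ < ρ} ∈ 𝓝 (0 : Fin n → ℝ) := by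
        have : Metric.ball (0 : Fin n → ℝ) ρ ∈ 𝓝 (0 : Fin n → ℝ) := ball_mem_nhds _ hρpos
        refine Filter.mem_of_superset this ?_
        intro y hy
        simpa [mem_ball_zero_iff] using hy
      exact this.eventually (eventually_of_mem hmem (fun y hy => hy))
    have ev1 : ∀ᶠ t in 𝓝 t₀, dist t t₀ < δ/2 :=
      eventually_of_mem (ball_mem_nhds t₀ (by linarith)) (fun t ht => mem_ball.1 ht)
    filter_upwards [ev1, ev2] with t h1 h2 htI
    -- the approximation on the closed ball
    have hbound : ∀ x ∈ closedBall p r, ‖((fderiv ℝ G (F t x)).comp (fderiv ℝ (F t) x)) -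
        (E : (Fin n → ℝ) →L[ℝ] (Fin n → ℝ))‖ ≤ c := by
      intro x hx
      rw [hE]
      have hd : dist (t, x) (t₀, p) < δ := by
        rw [Prod.dist_eq]
        refine max_lt (by linarith) ?_
        calc dist x p ≤ r := mem_closedBall.1 hx
          _ ≤ δ/2 := min_le_right _ _
          _ < δ := by linarith
      have := hball hd
      rw [dist_eq_norm] at this
      exact this.le
    have happrox : ApproximatesLinearOn (fun y => G (F t y))
        (E : (Fin n → ℝ) →L[ℝ] (Fin n → ℝ)) (closedBall p r) c :=
      aux_approx (convex_closedBall p r)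
        (fun x _ => (hder t htI x).hasFDerivWithinAt) _ hbound
    have hinj := happrox.injOn (Or.inr hclt)
    have hsurj := happrox.surjOn_closedBall_of_nonlinearRightInverse
      E.toNonlinearRightInverse hrpos.le Subset.rfl
    have h0mem : (0 : Fin n → ℝ) ∈
        closedBall (G (F t p)) ((((E.toNonlinearRightInverse.nnnorm : ℝ))⁻¹ - c) * r) := by
      rw [mem_closedBall, dist_comm, dist_zero_right]
      have hnn : (E.toNonlinearRightInverse.nnnorm : ℝ) = (Np : ℝ) := rfl
      rw [hnn]
      exact h2.le
    obtain ⟨x, hxmem, hfx⟩ := hsurj h0mem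
    have hfx' : G (F t x) = 0 := hfx
    exact ⟨x, hxmem, hfx', fun y hy hy0 => hinj hy hxmem
      (by show G (F t y) = G (F t x); rw [hy0, hfx'])⟩
  -- finiteness of the zero set for each parameter value
  have finS : ∀ t₀ ∈ I, (S t₀).Finite := by
    intro t₀ ht₀
    have h1 : ∀ p, ∃ r : ℝ, p ∈ S t₀ → (0 < r ∧
        ∀ y ∈ closedBall p r, G (F t₀ y) = 0 → y = p) := by
      intro p
      by_cases hp : p ∈ S t₀
      · obtain ⟨r, hrpos, -, hev⟩ := ball_spec t₀ ht₀ p hp 1 one_pos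
        obtain ⟨x, hxmem, hx0, huniq⟩ := hev.self_of_nhds ht₀
        have hpx : p = x := huniq p (mem_closedBall_self hrpos.le) ((hGF t₀ p).1 hp.2)
        exact ⟨r, fun _ => ⟨hrpos, fun y hy hy0 => (huniq y hy hy0).trans hpx.symm⟩⟩
      · exact ⟨1, fun h => absurd h hp⟩
    choose r hr using h1
    have hScpt : IsCompact (S t₀) := by
      have : S t₀ = closedBall (0 : Fin n → ℝ) 1 ∩ (F t₀) ⁻¹' V := by
        ext x; exact Iff.rfl
      rw [this]
      exact (isCompact_closedBall _ _).inter_right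
        (hVcpt.isClosed.preimage (hFsm t₀ ht₀).continuous)
    have hcover : S t₀ ⊆ ⋃ p ∈ S t₀, ball p (r p) := by
      intro y hy
      exact mem_iUnion₂.2 ⟨y, hy, mem_ball_self (hr y hy).1⟩
    obtain ⟨b', hb'sub, hb'fin, hb'cover⟩ :=
      hScpt.elim_finite_subcover_image (fun p _ => isOpen_ball) hcover
    refine hb'fin.subset ?_
    intro y hy
    obtain ⟨p, hp, hyp⟩ := mem_iUnion₂.1 (hb'cover hy)
    have := (hr p (hb'sub hp)).2 y (ball_subset_closedBall hyp) ((hGF t₀ y).1 hy.2)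
    rwa [this]
  -- local constancy of the count
  have key : ∀ t₀ ∈ I, ∀ᶠ t in 𝓝 t₀, t ∈ I →
      ((S t).Finite ∧ (S t).ncard = (S t₀).ncard) := by
    intro t₀ ht₀
    have hfin := finS t₀ ht₀
    -- a positive lower bound on distances between distinct zeros
    obtain ⟨ε₀, hε₀, hsep⟩ : ∃ ε₀ : ℝ, 0 < ε₀ ∧
        ∀ p ∈ S t₀, ∀ q ∈ S t₀, p ≠ q → ε₀ ≤ dist p q := by
      classical
      set T := hfin.toFinset with hT
      set P := (T ×ˢ T).filter (fun pq => pq.1 ≠ pq.2) with hP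
      by_cases hPne : P.Nonempty
      · refine ⟨P.inf' hPne (fun pq => dist pq.1 pq.2), ?_, ?_⟩
        · refine (Finset.lt_inf'_iff hPne).2 ?_
          rintro ⟨p, q⟩ hpq
          rw [hP, Finset.mem_filter] at hpq
          exact dist_pos.2 hpq.2
        · intro p hp q hq hne
          have hmem : (p, q) ∈ P := by
            rw [hP, Finset.mem_filter, Finset.mem_product]
            exact ⟨⟨hfin.mem_toFinset.2 hp, hfin.mem_toFinset.2 hq⟩, hne⟩
          exact Finset.inf'_le (fun pq => dist pq.1 pq.2) hmem
      · refine ⟨1, one_pos, fun p hp q hq hne => absurd ?_ hPne⟩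
        exact ⟨(p, q), by
          rw [hP, Finset.mem_filter, Finset.mem_product]
          exact ⟨⟨hfin.mem_toFinset.2 hp, hfin.mem_toFinset.2 hq⟩, hne⟩⟩
    -- zeros are in the open unit ball
    have hint : ∀ p ∈ S t₀, ‖p‖ < 1 := by
      intro p hp
      rcases lt_or_eq_of_le (mem_closedBall_zero_iff.1 hp.1) with h | h
      · exact h
      · exact absurd hp.2 (hbd t₀ ht₀ p (by rwa [mem_sphere_zero_iff_norm]))
    -- choose radii
    have h2 : ∀ p, ∃ r : ℝ, p ∈ S t₀ → (0 < r ∧ r ≤ (1 - ‖p‖)/2 ∧ r ≤ ε₀/3 ∧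
        ∀ᶠ t in 𝓝 t₀, t ∈ I → ∃ x ∈ closedBall p r, G (F t x) = 0 ∧
          ∀ y ∈ closedBall p r, G (F t y) = 0 → y = x) := by
      intro p
      by_cases hp : p ∈ S t₀
      · have hr₀pos : 0 < min ((1 - ‖p‖)/2) (ε₀/3) :=
          lt_min (by have := hint p hp; linarith) (by linarith)
        obtain ⟨r, hrpos, hrle, hev⟩ := ball_spec t₀ ht₀ p hp _ hr₀pos
        exact ⟨r, fun _ => ⟨hrpos, hrle.trans (min_le_left _ _),
          hrle.trans (min_le_right _ _), hev⟩⟩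
      · exact ⟨1, fun h => absurd h hp⟩
    choose r hr using h2
    have hsub : ∀ p ∈ S t₀, closedBall p (r p) ⊆ closedBall (0 : Fin n → ℝ) 1 := by
      intro p hp x hx
      rw [mem_closedBall]
      have h1 : dist x p ≤ r p := mem_closedBall.1 hx
      have h2 : r p ≤ (1 - ‖p‖)/2 := (hr p hp).2.1
      have h3 : dist p 0 = ‖p‖ := by rw [dist_zero_right]
      have h4 : ‖p‖ ≤ 1 := mem_closedBall_zero_iff.1 hp.1
      calc dist x 0 ≤ dist x p + dist p 0 := dist_triangle _ _ _
        _ ≤ 1 := by rw [h3]; linarith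
    -- the complement of the balls carries no zeros, for t near t₀
    set K := closedBall (0 : Fin n → ℝ) 1 \ ⋃ p ∈ S t₀, ball p (r p) with hK
    have hKcpt : IsCompact K :=
      (isCompact_closedBall _ _).diff (isOpen_biUnion fun p _ => isOpen_ball)
    have hUopen : IsOpen {q : ℝ × (Fin n → ℝ) | G (F q.1 q.2) ≠ 0} :=
      isOpen_compl_singleton.preimage (hG.continuous.comp hFcont)
    have hsubU : ({t₀} : Set ℝ) ×ˢ K ⊆ {q : ℝ × (Fin n → ℝ) | G (F q.1 q.2) ≠ 0} := by
      rintro ⟨a, x⟩ ⟨ha, hxK⟩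
      rcases hxK with ⟨hxB, hxU⟩
      have ha' : a = t₀ := ha
      intro h0
      rw [ha'] at h0
      have hxS : x ∈ S t₀ := ⟨hxB, (hGF t₀ x).2 h0⟩
      exact hxU (mem_iUnion₂.2 ⟨x, hxS, mem_ball_self (hr x hxS).1⟩)
    obtain ⟨v, w, hv, hw, hvt₀, hKw, hvw⟩ :=
      generalized_tube_lemma isCompact_singleton hKcpt hUopen hsubU
    have evK : ∀ᶠ t in 𝓝 t₀, ∀ x ∈ K, G (F t x) ≠ 0 :=
      eventually_of_mem (hv.mem_nhds (hvt₀ rfl)) (fun t htv x hxK => by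
        have : (t, x) ∈ {q : ℝ × (Fin n → ℝ) | G (F q.1 q.2) ≠ 0} := hvw ⟨htv, hKw hxK⟩
        exact this)
    have evP : ∀ᶠ t in 𝓝 t₀, ∀ p ∈ S t₀, t ∈ I →
        ∃ x ∈ closedBall p (r p), G (F t x) = 0 ∧
          ∀ y ∈ closedBall p (r p), G (F t y) = 0 → y = x :=
      (eventually_all_finite hfin).2 (fun p hp => (hr p hp).2.2.2)
    filter_upwards [evK, evP] with t h1 h2 htI
    have hz : ∀ p, ∃ x, p ∈ S t₀ → (x ∈ closedBall p (r p) ∧ G (F t x) = 0 ∧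
        ∀ y ∈ closedBall p (r p), G (F t y) = 0 → y = x) := by
      intro p
      by_cases hp : p ∈ S t₀
      · obtain ⟨x, hx1, hx2, hx3⟩ := h2 p hp htI
        exact ⟨x, fun _ => ⟨hx1, hx2, hx3⟩⟩
      · exact ⟨0, fun h => absurd h hp⟩
    choose z hz using hz
    have himg : S t = z '' (S t₀) := by
      ext y
      constructor
      · intro hy
        have hy0 : G (F t y) = 0 := (hGF t y).1 hy.2
        have hyU : y ∈ ⋃ p ∈ S t₀, ball p (r p) := by
          by_contra h
          exact h1 y ⟨hy.1, h⟩ hy0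
        obtain ⟨p, hp, hyp⟩ := mem_iUnion₂.1 hyU
        exact ⟨p, hp, ((hz p hp).2.2 y (ball_subset_closedBall hyp) hy0).symm⟩
      · rintro ⟨p, hp, rfl⟩
        obtain ⟨hmem, h0, -⟩ := hz p hp
        exact ⟨hsub p hp hmem, (hGF t _).2 h0⟩
    have hinj : InjOn z (S t₀) := by
      intro p hp q hq heq
      by_contra hne
      have hz1 : dist (z p) p ≤ r p := mem_closedBall.1 (hz p hp).1
      have hz2 : dist (z q) q ≤ r q := mem_closedBall.1 (hz q hq).1
      have h3 : r p ≤ ε₀/3 := (hr p hp).2.2.1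
      have h4 : r q ≤ ε₀/3 := (hr q hq).2.2.1
      have h5 : ε₀ ≤ dist p q := hsep p hp q hq hne
      have h6 : dist p q ≤ dist p (z p) + dist (z q) q := by
        rw [heq]; exact dist_triangle _ _ _
      rw [dist_comm p (z p)] at h6
      linarith
    rw [himg]
    exact ⟨hfin.image z, Set.ncard_image_of_injOn hinj⟩
  -- conclude by connectedness of the interval
  intro t ht
  refine ⟨finS t ht, ?_⟩
  haveI : PreconnectedSpace I := Subtype.preconnectedSpace isPreconnected_Icc
  set φ : I → ℕ := fun s => (S (s : ℝ)).ncard with hφdef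
  have hφ : IsLocallyConstant φ := by
    rw [IsLocallyConstant.iff_eventually_eq]
    intro x
    have hk := key (x : ℝ) x.2
    rw [nhds_subtype_eq_comap]
    exact (hk.comap Subtype.val).mono (fun y hy => (hy y.2).2)
  have h0I : (0 : ℝ) ∈ I := ⟨le_refl 0, zero_le_one⟩
  exact hφ.apply_eq_of_preconnectedSpace ⟨t, ht⟩ ⟨0, h0I⟩
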